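/- For every real s and every w > 0, the function λ ↦ (λ²·w)·C(s/(λ·w)) = C⫫(λs | λ²w) is monotone increasing on (0, ∞), where C(s) = 2·s·arsinh(s/2) − 2·√(s² + 4) + 4. -/

import Mathlib

/-- The Legendre conjugate of `C*(ζ) = 4 cosh(ζ/2) - 4`. -/
noncomputable def Cfun (s : ℝ) : ℝ :=
  2 * s * Real.arsinh (s / 2) - 2 * Real.sqrt (s ^ 2 + 4) + 4

lemma sinh_le_mul_cosh {y : ℝ} (hy : 0 ≤ y) : Real.sinh y ≤ y * Real.cosh y := by
  have h : MonotoneOn (fun y : ℝ => y * Real.cosh y - Real.sinh y) (Set.Ici 0) := by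
    apply monotoneOn_of_deriv_nonneg (convex_Ici 0)
    · exact ((continuous_id.mul Real.continuous_cosh).sub Real.continuous_sinh).continuousOn
    · intro x hx
      exact (((hasDerivAt_id x).mul (Real.hasDerivAt_cosh x)).sub
        (Real.hasDerivAt_sinh x)).differentiableAt.differentiableWithinAt
    · intro x hx
      rw [interior_Ici, Set.mem_Ioi] at hx
      have hd : HasDerivAt (fun y : ℝ => y * Real.cosh y - Real.sinh y) (x * Real.sinh x) x := by
        have h' := ((hasDerivAt_id x).mul (Real.hasDerivAt_cosh x)).sub (Real.hasDerivAt_sinh x)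
        refine h'.congr_deriv ?_
        simp only [id_eq, one_mul]
        ring
      rw [hd.deriv]
      exact mul_nonneg hx.le (Real.sinh_nonneg_iff.2 hx.le)
  have := h Set.self_mem_Ici (Set.mem_Ici.2 hy) hy
  simp only [Real.cosh_zero, Real.sinh_zero, zero_mul, sub_zero] at this
  linarith

lemma two_cosh_le (t : ℝ) : 2 * Real.cosh t ≤ t * Real.sinh t + 2 := by
  have hc : Real.cosh t = 2 * Real.sinh (t / 2) ^ 2 + 1 := by
    have h1 := Real.cosh_two_mul (t / 2)
    have h2 := Real.cosh_sq (t / 2)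
    rw [show 2 * (t / 2) = t by ring] at h1
    rw [h1, h2]; ring
  have hs : Real.sinh t = 2 * Real.sinh (t / 2) * Real.cosh (t / 2) := by
    have h1 := Real.sinh_two_mul (t / 2)
    rwa [show 2 * (t / 2) = t by ring] at h1
  have key : 0 ≤ Real.sinh (t / 2) * (t / 2 * Real.cosh (t / 2) - Real.sinh (t / 2)) := by
    rcases le_or_gt 0 t with h | h
    · exact mul_nonneg (Real.sinh_nonneg_iff.2 (by linarith))
        (by have := sinh_le_mul_cosh (y := t / 2) (by linarith); linarith)
    · have ha : Real.sinh (t / 2) ≤ 0 := Real.sinh_nonpos_iff.2 (by linarith)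
      have hb : t / 2 * Real.cosh (t / 2) - Real.sinh (t / 2) ≤ 0 := by
        have h' := sinh_le_mul_cosh (y := -(t / 2)) (by linarith)
        rw [Real.sinh_neg, Real.cosh_neg] at h'
        linarith
      nlinarith [mul_nonneg (neg_nonneg.2 ha) (neg_nonneg.2 hb)]
  rw [hc, hs]
  nlinarith [key]

lemma key_ineq (u : ℝ) : u * (2 * Real.arsinh (u / 2)) ≤ 2 * Cfun u := by
  unfold Cfun
  set t := Real.arsinh (u / 2) with ht
  have hu : u = 2 * Real.sinh t := by rw [ht, Real.sinh_arsinh]; ring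
  have hsq : Real.sqrt (u ^ 2 + 4) = 2 * Real.cosh t := by
    rw [hu]
    have h1 : (2 * Real.sinh t) ^ 2 + 4 = (2 * Real.cosh t) ^ 2 := by
      have := Real.cosh_sq t; nlinarith
    rw [h1, Real.sqrt_sq (by positivity)]
  rw [hsq, hu]
  have := two_cosh_le t
  nlinarith [this]

lemma hasDerivAt_Cfun (x : ℝ) : HasDerivAt Cfun (2 * Real.arsinh (x / 2)) x := by
  have h1 : HasDerivAt (fun y : ℝ => Real.arsinh (y / 2))
      ((Real.sqrt (1 + (x / 2) ^ 2))⁻¹ * (1 / 2)) x := by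
    have := (Real.hasDerivAt_arsinh (x / 2)).comp x ((hasDerivAt_id x).div_const 2)
    simpa [Function.comp_def] using this
  have hpos : (0 : ℝ) < x ^ 2 + 4 := by positivity
  have h2 : HasDerivAt (fun y : ℝ => Real.sqrt (y ^ 2 + 4))
      (1 / (2 * Real.sqrt (x ^ 2 + 4)) * (2 * x)) x := by
    have := (Real.hasDerivAt_sqrt hpos.ne').comp x ((hasDerivAt_pow 2 x).add_const 4)
    simpa [Function.comp_def] using this
  have h3 : HasDerivAt (fun y : ℝ => 2 * y) (2 : ℝ) x := by
    simpa using (hasDerivAt_id x).const_mul 2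
  have hD := ((h3.mul h1).sub (h2.const_mul 2)).add_const 4
  have hfun : Cfun = fun y : ℝ =>
      2 * y * Real.arsinh (y / 2) - 2 * Real.sqrt (y ^ 2 + 4) + 4 := rfl
  have hsqrt : Real.sqrt (1 + (x / 2) ^ 2) = Real.sqrt (x ^ 2 + 4) / 2 := by
    rw [show (1 : ℝ) + (x / 2) ^ 2 = (x ^ 2 + 4) / 4 by ring,
      Real.sqrt_div (by positivity) 4, show Real.sqrt 4 = 2 by
        rw [show (4 : ℝ) = 2 ^ 2 by norm_num, Real.sqrt_sq (by norm_num)]]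
  have hspos : 0 < Real.sqrt (x ^ 2 + 4) := Real.sqrt_pos.2 hpos
  rw [hfun]
  refine hD.congr_deriv ?_
  rw [hsqrt]
  field_simp
  ring

theorem perspective_scaling_monotone (s w : ℝ) (hw : 0 < w) :
    MonotoneOn (fun lam : ℝ => (lam ^ 2 * w) * Cfun (s / (lam * w))) (Set.Ioi 0) := by
  have hderiv : ∀ lam ∈ Set.Ioi (0 : ℝ),
      HasDerivAt (fun lam : ℝ => (lam ^ 2 * w) * Cfun (s / (lam * w)))
      (2 * lam * w * Cfun (s / (lam * w)) -
        s * (2 * Real.arsinh (s / (lam * w) / 2))) lam := by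
    intro lam hlam
    rw [Set.mem_Ioi] at hlam
    have hlw : lam * w ≠ 0 := by positivity
    have hlw2 : lam ^ 2 * w ≠ 0 := by positivity
    have hinner : HasDerivAt (fun l : ℝ => s / (l * w)) (-(s / (lam ^ 2 * w))) lam := by
      have hmul : HasDerivAt (fun l : ℝ => l * w) w lam := by
        simpa using (hasDerivAt_id lam).mul_const w
      have hd := (hasDerivAt_const lam s).div hmul hlw
      refine hd.congr_deriv ?_
      field_simp
      ring
    have houter := (hasDerivAt_Cfun (s / (lam * w))).comp lam hinner
    have hsq : HasDerivAt (fun l : ℝ => l ^ 2 * w) (2 * lam * w) lam := by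
      have := (hasDerivAt_pow 2 lam).mul_const w
      refine this.congr_deriv ?_
      ring
    have hmain := hsq.mul houter
    have heq : 2 * lam * w * Cfun (s / (lam * w)) -
        s * (2 * Real.arsinh (s / (lam * w) / 2)) =
        2 * lam * w * Cfun (s / (lam * w)) +
        lam ^ 2 * w * (2 * Real.arsinh (s / (lam * w) / 2) * -(s / (lam ^ 2 * w))) := by
      field_simp
      ring
    rw [heq]
    exact hmain
  apply monotoneOn_of_deriv_nonneg (convex_Ioi 0)
  · intro lam hlam
    exact (hderiv lam hlam).continuousAt.continuousWithinAt
  · intro lam hlam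
    rw [interior_Ioi] at hlam
    exact (hderiv lam hlam).differentiableAt.differentiableWithinAt
  · intro lam hlam
    rw [interior_Ioi] at hlam
    rw [(hderiv lam hlam).deriv]
    have hlam' : (0 : ℝ) < lam := hlam
    set u := s / (lam * w) with hu
    have hs : s = u * (lam * w) := by
      rw [hu]; field_simp
    have h1 : 0 ≤ lam * w * (2 * Cfun u - u * (2 * Real.arsinh (u / 2))) :=
      mul_nonneg (by positivity) (by linarith [key_ineq u])
    rw [hs]
    nlinarith [h1]
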